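/- arXiv:2307.00401 — 3 statements merged into one kernel-verified Lean document; each statement's English description precedes it below -/
import Mathlib

section
/- Let N ≥ 1 and equip ℤ^N with the ℓ∞ metric d∞(x,y) = max_{1≤i≤N} |x_i − y_i|. Let g : ℤ^N → ℤ^N be the bijection g(x₁, x₂, …, x_N) = (x₂ + 1, x₃, …, x_N, x₁). Then g^N is the translation by (1, 1, …, 1), and for every x ∈ ℤ^N the limit lim_{n→∞} d∞(x, g^n · x)/n exists and equals 1/N (g is hyperbolic with translation length 1/N). -/
namespace HellyPaper

variable {V : Type*}

/-- The combinatorial ball of radius `r` around `x` in the graph `G`. -/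
def ball (G : SimpleGraph V) (x : V) (r : ℕ) : Set V := {y | G.dist x y ≤ r}

/-- A Helly graph: a connected graph in which every family of pairwise
intersecting combinatorial balls has nonempty global intersection. -/
def IsHellyGraph (G : SimpleGraph V) : Prop :=
  G.Connected ∧ ∀ S : Set (V × ℕ),
    (∀ p ∈ S, ∀ q ∈ S, (ball G p.1 p.2 ∩ ball G q.1 q.2).Nonempty) →
    (⋂ p ∈ S, ball G p.1 p.2).Nonempty

/-- A round clique: a nonempty clique which is an intersection of a family of
combinatorial balls. -/
def IsRoundClique (G : SimpleGraph V) (σ : Set V) : Prop :=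
  σ.Nonempty ∧ G.IsClique σ ∧ ∃ S : Set (V × ℕ), σ = ⋂ p ∈ S, ball G p.1 p.2

/-- Every strictly increasing chain of round cliques σ₀ ⊊ σ₁ ⊊ ⋯ ⊊ σ_k has k ≤ N
(combinatorial dimension at most N, following Corollary C of the paper). -/
def DimAtMost (G : SimpleGraph V) (N : ℕ) : Prop :=
  ∀ (k : ℕ) (c : Fin (k + 1) → Set V),
    (∀ i, IsRoundClique G (c i)) → StrictMono c → k ≤ N

/-- The injective hull of `G`, realized as the set of extremal functions. -/
def InjHull (G : SimpleGraph V) : Set (V → ℝ) :=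
  {f | (∀ x y : V, (G.dist x y : ℝ) ≤ f x + f y) ∧
    ∀ x : V, IsLUB (Set.range fun y => (G.dist x y : ℝ) - f y) (f x)}

/-- The sup metric d∞ on the injective hull. -/
noncomputable def supDist (f g : V → ℝ) : ℝ := ⨆ x, |f x - g x|

/-- The isometric action of a graph automorphism on the injective hull:
(g·f)(x) = f(g⁻¹·x). -/
def hullAct (g : Equiv.Perm V) (f : V → ℝ) : V → ℝ := fun x => f (g⁻¹ x)

/-- A permutation of the vertices is a graph automorphism if it preserves adjacency. -/
def IsGraphAut (G : SimpleGraph V) (g : Equiv.Perm V) : Prop :=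
  ∀ x y, G.Adj (g x) (g y) ↔ G.Adj x y

/-- The round clique associated to a point of the injective hull:
φ(p) = ⋂_{x ∈ X} B(x, ⌈p(x)⌉). -/
def phi (G : SimpleGraph V) (p : V → ℝ) : Set V :=
  {z | ∀ x : V, (G.dist x z : ℝ) ≤ (⌈p x⌉ : ℝ)}

/-- The values of `p` all lie in (1/2)ℕ. -/
def halfInt (p : V → ℝ) : Prop := ∀ x, ∃ k : ℕ, p x = (k : ℝ) / 2

end HellyPaper

namespace HellyPaper

lemma div_step (N n i : ℕ) (hN : 0 < N) (hi : i < N) :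
    (n + 1 + (i + N - 1) % N) / N
      = (n + (i + N - 1) % N) / N + if (i + n) % N = 0 then 1 else 0 := by
  have hs : (n + (i + N - 1) % N + 1) % N = (i + n) % N := by
    rcases Nat.eq_zero_or_pos i with h | h
    · subst h
      rw [Nat.mod_eq_of_lt (show 0 + N - 1 < N by omega),
        show n + (0 + N - 1) + 1 = n + N by omega, Nat.add_mod_right]
      simp
    · rw [show i + N - 1 = (i - 1) + N by omega, Nat.add_mod_right,
        Nat.mod_eq_of_lt (show i - 1 < N by omega),
        show n + (i - 1) + 1 = i + n by omega]
  rw [show n + 1 + (i + N - 1) % N = (n + (i + N - 1) % N) + 1 by omega,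
    Nat.succ_div]
  congr 1
  simp [Nat.dvd_iff_mod_eq_zero, hs]

lemma pow_formula (N : ℕ) (hN : 0 < N) (g : Equiv.Perm (Fin N → ℤ))
    (hg : ∀ (x : Fin N → ℤ) (i : Fin N),
      g x i = x ⟨((i : ℕ) + 1) % N, Nat.mod_lt _ hN⟩ +
        (if (i : ℕ) = 0 then 1 else 0)) :
    ∀ (n : ℕ) (x : Fin N → ℤ) (i : Fin N),
      (g ^ n) x i = x ⟨((i : ℕ) + n) % N, Nat.mod_lt _ hN⟩ +
        (((n + ((i : ℕ) + N - 1) % N) / N : ℕ) : ℤ) := by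
  intro n
  induction n with
  | zero =>
    intro x i
    have h1 : ((i : ℕ) + 0) % N = (i : ℕ) := by
      rw [Nat.add_zero]; exact Nat.mod_eq_of_lt i.isLt
    have h2 : (0 + ((i : ℕ) + N - 1) % N) / N = 0 :=
      Nat.div_eq_of_lt (by rw [Nat.zero_add]; exact Nat.mod_lt _ hN)
    simp only [pow_zero, Equiv.Perm.one_apply, h2, Nat.cast_zero, add_zero]
    exact congrArg x (Fin.ext h1.symm)
  | succ n ih =>
    intro x i
    rw [pow_succ, Equiv.Perm.mul_apply, ih (g x) i, hg]
    have hidx : (((((i : ℕ) + n) % N) + 1) % N) = ((i : ℕ) + (n + 1)) % N := by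
      rw [Nat.mod_add_mod, Nat.add_assoc]
    have hdiv := div_step N n (i : ℕ) hN i.isLt
    simp only [hidx]
    rw [hdiv]
    push_cast
    ring

/-- On ℤ^N with the ℓ∞ metric, the bijection
g(x₁,…,x_N) = (x₂+1, x₃, …, x_N, x₁) satisfies: g^N is the translation by
(1,…,1), and g is hyperbolic with translation length 1/N. -/
theorem stmt17 (N : ℕ) (hN : 0 < N) (g : Equiv.Perm (Fin N → ℤ))
    (hg : ∀ (x : Fin N → ℤ) (i : Fin N),
      g x i = x ⟨((i : ℕ) + 1) % N, Nat.mod_lt _ hN⟩ +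
        (if (i : ℕ) = 0 then 1 else 0)) :
    (∀ (x : Fin N → ℤ) (i : Fin N), (g ^ N) x i = x i + 1) ∧
    ∀ x : Fin N → ℤ, Filter.Tendsto
      (fun n : ℕ =>
        ((Finset.univ.sup fun i : Fin N => (x i - (g ^ n) x i).natAbs : ℕ) : ℝ) / n)
      Filter.atTop (nhds (1 / (N : ℝ))) := by
  have key := pow_formula N hN g hg
  constructor
  · intro x i
    rw [key N x i]
    have h1 : ((i : ℕ) + N) % N = (i : ℕ) := by
      rw [Nat.add_mod_right]; exact Nat.mod_eq_of_lt i.isLt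
    have h2 : (N + ((i : ℕ) + N - 1) % N) / N = 1 := by
      rw [Nat.add_comm, Nat.add_div_right _ hN, Nat.div_eq_of_lt (Nat.mod_lt _ hN)]
    rw [h2]
    norm_num
    exact congrArg x (Fin.ext (Nat.mod_eq_of_lt i.isLt))
  · intro x
    have hNR : (0 : ℝ) < N := by exact_mod_cast hN
    set M : ℕ := Finset.univ.sup fun i : Fin N =>
      Finset.univ.sup fun j : Fin N => (x i - x j).natAbs with hMdef
    have hM : ∀ i j : Fin N, (x i - x j).natAbs ≤ M := by
      intro i j
      exact le_trans
        (Finset.le_sup (f := fun j => (x i - x j).natAbs) (Finset.mem_univ j))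
        (Finset.le_sup (f := fun i => Finset.univ.sup fun j => (x i - x j).natAbs)
          (Finset.mem_univ i))
    -- bounds on the drift term
    have hcb : ∀ (n : ℕ) (i : Fin N),
        (n : ℝ) / N - 1 ≤ (((n + ((i : ℕ) + N - 1) % N) / N : ℕ) : ℝ) ∧
        (((n + ((i : ℕ) + N - 1) % N) / N : ℕ) : ℝ) ≤ (n : ℝ) / N + 1 := by
      intro n i
      set s := ((i : ℕ) + N - 1) % N with hs
      have hsN : s < N := Nat.mod_lt _ hN
      have hdm := Nat.div_add_mod (n + s) N
      have hrm : (n + s) % N < N := Nat.mod_lt _ hN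
      set c := (n + s) / N with hc
      have h1 : N * c ≤ n + N := by omega
      have h2 : n ≤ N * c + N := by omega
      have h1' : (N : ℝ) * c ≤ (n : ℝ) + N := by exact_mod_cast h1
      have h2' : (n : ℝ) ≤ (N : ℝ) * c + N := by exact_mod_cast h2
      constructor
      · have : (n : ℝ) / N ≤ (c : ℝ) + 1 := by rw [div_le_iff₀ hNR]; nlinarith
        linarith
      · have : (c : ℝ) - 1 ≤ (n : ℝ) / N := by rw [le_div_iff₀ hNR]; nlinarith
        linarith
    -- per-coordinate bound
    have hper : ∀ (n : ℕ) (i : Fin N),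
        |(((x i - (g ^ n) x i).natAbs : ℕ) : ℝ) - (n : ℝ) / N| ≤ (M : ℝ) + 1 := by
      intro n i
      rw [key n x i]
      set j : Fin N := ⟨((i : ℕ) + n) % N, Nat.mod_lt _ hN⟩ with hj
      set c : ℕ := (n + ((i : ℕ) + N - 1) % N) / N with hc
      have hcb' := hcb n i
      rw [← hc] at hcb'
      have habs : (((x i - (x j + (c : ℤ))).natAbs : ℕ) : ℝ)
          = |((x i : ℝ) - (x j : ℝ)) - (c : ℝ)| := by
        rw [Nat.cast_natAbs]
        push_cast
        ring_nf
      rw [habs]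
      have hu : |(x i : ℝ) - (x j : ℝ)| ≤ (M : ℝ) := by
        have := hM i j
        rw [show (x i : ℝ) - (x j : ℝ) = (((x i - x j : ℤ) : ℝ)) by push_cast; ring,
          ← Int.cast_abs, Int.abs_eq_natAbs]
        exact_mod_cast this
      have h3 : |((x i : ℝ) - (x j : ℝ)) - (c : ℝ)| ≤ |(x i : ℝ) - (x j : ℝ)| + |(c : ℝ)| :=
        abs_sub _ _
      have h4 : |(c : ℝ)| - |(x i : ℝ) - (x j : ℝ)| ≤ |((x i : ℝ) - (x j : ℝ)) - (c : ℝ)| := by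
        rw [abs_sub_comm ((x i : ℝ) - (x j : ℝ)) (c : ℝ)]
        exact abs_sub_abs_le_abs_sub _ _
      have h5 : |(c : ℝ)| = (c : ℝ) := abs_of_nonneg (by positivity)
      rw [abs_le]
      obtain ⟨hcl, hcu⟩ := hcb'
      rw [h5] at h4
      constructor <;> linarith
    have hDper : ∀ n : ℕ,
        |((Finset.univ.sup fun i : Fin N => (x i - (g ^ n) x i).natAbs : ℕ) : ℝ)
          - (n : ℝ) / N| ≤ (M : ℝ) + 1 := by
      intro n
      have hne : (Finset.univ : Finset (Fin N)).Nonempty := ⟨⟨0, hN⟩, Finset.mem_univ _⟩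
      obtain ⟨i, -, hi⟩ := Finset.exists_mem_eq_sup Finset.univ hne
        (fun i : Fin N => (x i - (g ^ n) x i).natAbs)
      have h0 := hper n ⟨0, hN⟩
      rw [abs_le] at h0
      have hi' := hper n i
      rw [abs_le] at hi'
      have hle : (((x ⟨0, hN⟩ - (g ^ n) x ⟨0, hN⟩).natAbs : ℕ) : ℝ)
          ≤ ((Finset.univ.sup fun i : Fin N => (x i - (g ^ n) x i).natAbs : ℕ) : ℝ) := by
        exact_mod_cast Finset.le_sup (f := fun i : Fin N => (x i - (g ^ n) x i).natAbs)
          (Finset.mem_univ _)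
      rw [abs_le]
      constructor
      · linarith [h0.1]
      · rw [hi]; linarith [hi'.2]
    rw [tendsto_iff_dist_tendsto_zero]
    refine squeeze_zero' (Filter.Eventually.of_forall fun n => dist_nonneg) ?_
      (tendsto_const_div_atTop_nhds_zero_nat ((M : ℝ) + 1))
    filter_upwards [Filter.eventually_ge_atTop 1] with n hn
    have hn' : (0 : ℝ) < n := by exact_mod_cast hn
    have hn0 : (n : ℝ) ≠ 0 := ne_of_gt hn'
    have hN0 : (N : ℝ) ≠ 0 := ne_of_gt hNR
    rw [Real.dist_eq]
    have hrw : ((Finset.univ.sup fun i : Fin N => (x i - (g ^ n) x i).natAbs : ℕ) : ℝ) / n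
        - 1 / N
        = (((Finset.univ.sup fun i : Fin N => (x i - (g ^ n) x i).natAbs : ℕ) : ℝ)
            - (n : ℝ) / N) / n := by
      field_simp
    rw [hrw, abs_div, abs_of_pos hn']
    gcongr
    exact hDper n


end HellyPaper
end

section
/- Let X be a Helly graph, and let X' be its first Helly subdivision: the graph whose vertices are the round cliques of X, with an edge between two distinct round cliques σ, τ if and only if σ ∩ τ ≠ ∅ and σ ∪ τ is a clique of X. Then X' is connected, and the natural map x ↦ {x} from X to X' is a 2-homothetic embedding: for all vertices x, y of X, the graph distance in X' between the singletons {x} and {y} equals 2·d(x,y). -/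
namespace HellyPaper
/-- The first Helly subdivision: vertices are round cliques, with an edge
between distinct round cliques σ, τ iff σ ∩ τ ≠ ∅ and σ ∪ τ is a clique. -/
def subdiv {V : Type*} (G : SimpleGraph V) :
    SimpleGraph {σ : Set V // IsRoundClique G σ} where
  Adj σ τ := σ ≠ τ ∧ ((σ : Set V) ∩ (τ : Set V)).Nonempty ∧
    G.IsClique ((σ : Set V) ∪ (τ : Set V))
  symm := by
    constructor
    rintro σ τ ⟨h1, h2, h3⟩
    exact ⟨h1.symm, by rwa [Set.inter_comm], by rwa [Set.union_comm]⟩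
  loopless := by
    constructor
    rintro σ ⟨h1, -, -⟩
    exact h1 rfl


section ProofAux
variable {V : Type*} {G : SimpleGraph V}
open SimpleGraph

lemma singleton_round (hc : G.Connected) (x : V) : IsRoundClique G {x} := by
  refine ⟨Set.singleton_nonempty x, G.isClique_singleton x, {(x, 0)}, ?_⟩
  ext y
  simp [ball, Nat.le_zero, hc.dist_eq_zero_iff, eq_comm]

lemma edge_round (hc : G.Connected) {x y : V} (h : G.Adj x y) :
    ∃ σ : Set V, IsRoundClique G σ ∧ x ∈ σ ∧ y ∈ σ := by
  set σ : Set V := ⋂ z : V, ball G z (max (G.dist z x) (G.dist z y)) with hσ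
  have hmem : ∀ u, u ∈ σ ↔ ∀ z, G.dist z u ≤ max (G.dist z x) (G.dist z y) := by
    intro u; simp [hσ, ball]
  have hx : x ∈ σ := (hmem x).2 fun z => le_max_left _ _
  have hy : y ∈ σ := (hmem y).2 fun z => le_max_right _ _
  have hd1 : G.dist x y = 1 := SimpleGraph.dist_eq_one_iff_adj.2 h
  have hd2 : G.dist y x = 1 := by rw [SimpleGraph.dist_comm]; exact hd1
  have hone : ∀ u ∈ σ, G.dist x u ≤ 1 ∧ G.dist y u ≤ 1 := by
    intro u hu
    have h1 := (hmem u).1 hu x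
    have h2 := (hmem u).1 hu y
    rw [SimpleGraph.dist_self, hd1] at h1
    rw [SimpleGraph.dist_self, hd2] at h2
    constructor
    · simpa using h1
    · simpa using h2
  refine ⟨σ, ⟨⟨x, hx⟩, ?_, Set.range (fun z => (z, max (G.dist z x) (G.dist z y))), ?_⟩, hx, hy⟩
  · intro u hu v hv huv
    have h1 := (hmem v).1 hv u
    have h2x : G.dist u x ≤ 1 := by rw [SimpleGraph.dist_comm]; exact (hone u hu).1
    have h2y : G.dist u y ≤ 1 := by rw [SimpleGraph.dist_comm]; exact (hone u hu).2
    have hle : G.dist u v ≤ 1 := le_trans h1 (max_le h2x h2y)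
    have hne : G.dist u v ≠ 0 := (hc.dist_eq_zero_iff).ne.2 huv
    exact SimpleGraph.dist_eq_one_iff_adj.1 (le_antisymm hle (Nat.one_le_iff_ne_zero.2 hne))
  · rw [Set.biInter_range]

noncomputable def fval (G : SimpleGraph V) (x : V) (σ : Set V) : ℕ :=
  sInf ((fun u => G.dist x u) '' σ) + sSup ((fun u => G.dist x u) '' σ)

lemma fval_singleton (x y : V) : fval G x {y} = 2 * G.dist x y := by
  simp [fval, Set.image_singleton, two_mul]

lemma fval_step (hc : G.Connected) (x : V) {σ τ : Set V}
    (hcl : G.IsClique (σ ∪ τ)) (hint : (σ ∩ τ).Nonempty) :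
    fval G x σ ≤ fval G x τ + 1 := by
  obtain ⟨w, hwσ, hwτ⟩ := hint
  set A := (fun u => G.dist x u) '' σ with hA
  set B := (fun u => G.dist x u) '' τ with hB
  have hcA : G.dist x w ∈ A := ⟨w, hwσ, rfl⟩
  have hcB : G.dist x w ∈ B := ⟨w, hwτ, rfl⟩
  have key : ∀ u ∈ σ ∪ τ, ∀ v ∈ σ ∪ τ, G.dist x u ≤ G.dist x v + 1 := by
    intro u hu v hv
    rcases eq_or_ne u v with rfl | hne
    · omega
    · have hadj : G.Adj v u := (hcl hv hu hne.symm)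
      have := hc.dist_triangle (u := x) (v := v) (w := u)
      have h1 : G.dist v u = 1 := SimpleGraph.dist_eq_one_iff_adj.2 hadj
      omega
  have hABle : ∀ a ∈ A, ∀ b ∈ B, a ≤ b + 1 := by
    rintro a ⟨u, hu, rfl⟩ b ⟨v, hv, rfl⟩
    exact key u (Or.inl hu) v (Or.inr hv)
  have hbddB : BddAbove B := by
    refine ⟨G.dist x w + 1, ?_⟩
    rintro b ⟨v, hv, rfl⟩
    exact key v (Or.inr hv) w (Or.inl hwσ)
  have hInfB : sInf B ∈ B := Nat.sInf_mem ⟨_, hcB⟩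
  have h1 : sSup A ≤ sInf B + 1 := by
    apply csSup_le ⟨_, hcA⟩
    intro a ha
    exact hABle a ha _ hInfB
  have h2 : sInf A ≤ G.dist x w := Nat.sInf_le hcA
  have h3 : G.dist x w ≤ sSup B := le_csSup hbddB hcB
  simp only [fval, ← hA, ← hB]
  omega

lemma fval_walk (hc : G.Connected) (x : V)
    {σ τ : {s : Set V // IsRoundClique G s}} (w : (subdiv G).Walk σ τ) :
    fval G x σ.1 ≤ fval G x τ.1 + w.length := by
  induction w with
  | nil => simp
  | @cons a b c h p ih =>
      obtain ⟨hne, hint, hcl⟩ := id h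
      have := fval_step hc x hcl hint
      simp only [SimpleGraph.Walk.length_cons]
      omega

lemma adj_to_singleton (hc : G.Connected) {x : V}
    (sx σ : {s : Set V // IsRoundClique G s}) (hx : sx.1 = {x})
    (hmem : x ∈ σ.1) (hne : σ.1 ≠ {x}) : (subdiv G).Adj sx σ := by
  refine ⟨fun h => hne (by rw [← h]; exact hx), ⟨x, by simp [hx, hmem]⟩, ?_⟩
  rw [hx, Set.union_eq_self_of_subset_left (Set.singleton_subset_iff.2 hmem)]
  exact σ.2.2.1

lemma reach_to_singleton (hc : G.Connected) {x : V}
    (sx σ : {s : Set V // IsRoundClique G s}) (hx : sx.1 = {x})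
    (hmem : x ∈ σ.1) : (subdiv G).Reachable sx σ := by
  rcases eq_or_ne σ.1 {x} with h | h
  · have : sx = σ := Subtype.ext (hx.trans h.symm)
    rw [this]
  · exact (adj_to_singleton hc sx σ hx hmem h).reachable

lemma adj_singleton_reach (hc : G.Connected) {x y : V} (h : G.Adj x y)
    (sx sy : {s : Set V // IsRoundClique G s}) (hx : sx.1 = {x}) (hy : sy.1 = {y}) :
    (subdiv G).Reachable sx sy := by
  obtain ⟨σ, hσ, hxσ, hyσ⟩ := edge_round hc h
  have h1 := reach_to_singleton hc sx ⟨σ, hσ⟩ hx hxσ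
  have h2 := reach_to_singleton hc sy ⟨σ, hσ⟩ hy hyσ
  exact h1.trans h2.symm

lemma reach_singletons (hc : G.Connected) {x y : V} (w : G.Walk x y) :
    (subdiv G).Reachable ⟨{x}, singleton_round hc x⟩ ⟨{y}, singleton_round hc y⟩ := by
  induction w with
  | nil => exact SimpleGraph.Reachable.refl _
  | @cons a b c h p ih => exact (adj_singleton_reach hc h _ _ rfl rfl).trans ih

lemma subdiv_connected (hc : G.Connected) : (subdiv G).Connected := by
  rw [SimpleGraph.connected_iff]
  obtain ⟨x0⟩ := hc.nonempty
  refine ⟨?_, ⟨⟨{x0}, singleton_round hc x0⟩⟩⟩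
  intro σ τ
  obtain ⟨x, hx⟩ := σ.2.1
  obtain ⟨y, hy⟩ := τ.2.1
  obtain ⟨w⟩ := hc x y
  exact ((reach_to_singleton hc _ σ rfl hx).symm.trans (reach_singletons hc w)).trans
    (reach_to_singleton hc _ τ rfl hy)

lemma dist_singleton_adj_le (hc : G.Connected) {x y : V} (h : G.Adj x y)
    (sx sy : {s : Set V // IsRoundClique G s}) (hx : sx.1 = {x}) (hy : sy.1 = {y}) :
    (subdiv G).dist sx sy ≤ 2 := by
  obtain ⟨σ, hσ, hxσ, hyσ⟩ := edge_round hc h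
  have hne1 : σ ≠ ({x} : Set V) := fun he => h.ne (Set.mem_singleton_iff.1 (he ▸ hyσ)).symm
  have hne2 : σ ≠ ({y} : Set V) := fun he => h.ne (Set.mem_singleton_iff.1 (he ▸ hxσ))
  have a1 : (subdiv G).Adj sx ⟨σ, hσ⟩ := adj_to_singleton hc sx ⟨σ, hσ⟩ hx hxσ (by simpa using hne1)
  have a2 : (subdiv G).Adj ⟨σ, hσ⟩ sy := ((subdiv G).adj_symm
    (adj_to_singleton hc sy ⟨σ, hσ⟩ hy hyσ (by simpa using hne2)))
  have := SimpleGraph.dist_le (SimpleGraph.Walk.cons a1 (SimpleGraph.Walk.cons a2 SimpleGraph.Walk.nil))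
  simpa using this

lemma dist_singletons_le (hc : G.Connected) {x y : V} (w : G.Walk x y)
    (sx sy : {s : Set V // IsRoundClique G s}) (hx : sx.1 = {x}) (hy : sy.1 = {y}) :
    (subdiv G).dist sx sy ≤ 2 * w.length := by
  induction w generalizing sx with
  | nil =>
      have : sx = sy := Subtype.ext (hx.trans hy.symm)
      simp [this]
  | @cons a b c h p ih =>
      have hb : IsRoundClique G {b} := singleton_round hc b
      have t1 : (subdiv G).dist sx ⟨{b}, hb⟩ ≤ 2 := dist_singleton_adj_le hc h sx ⟨{b}, hb⟩ hx rfl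
      have t2 : (subdiv G).dist (⟨{b}, hb⟩ : {s : Set V // IsRoundClique G s}) sy ≤ 2 * p.length :=
        ih ⟨{b}, hb⟩ rfl hy
      have := (subdiv_connected hc).dist_triangle (u := sx) (v := ⟨{b}, hb⟩) (w := sy)
      simp only [SimpleGraph.Walk.length_cons]
      omega

end ProofAux

/-- The first Helly subdivision of a Helly graph is connected, singletons are
round cliques, and the natural map x ↦ {x} is a 2-homothetic embedding:
the distance in X' between {x} and {y} is 2·d(x,y). -/
theorem stmt18 {V : Type*} (G : SimpleGraph V) (hHelly : IsHellyGraph G) :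
    (∀ x : V, IsRoundClique G {x}) ∧
    (subdiv G).Connected ∧
    ∀ (x y : V) (sx sy : {σ : Set V // IsRoundClique G σ}),
      (sx : Set V) = {x} → (sy : Set V) = {y} →
      (subdiv G).dist sx sy = 2 * G.dist x y := by
  obtain ⟨hc, -⟩ := hHelly
  refine ⟨singleton_round hc, subdiv_connected hc, ?_⟩
  intro x y sx sy hx hy
  apply le_antisymm
  · obtain ⟨w, hw⟩ := hc.exists_walk_length_eq_dist x y
    have := dist_singletons_le hc w sx sy hx hy
    omega
  · obtain ⟨W, hW⟩ := (subdiv_connected hc).exists_walk_length_eq_dist sy sx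
    have h1 := fval_walk hc x W
    rw [hx, hy, fval_singleton, fval_singleton, SimpleGraph.dist_self] at h1
    rw [SimpleGraph.dist_comm] at hW
    omega


end HellyPaper
end

section
/- Let X be a Helly graph and let g be an elliptic graph automorphism of X (some orbit of ⟨g⟩ in X is bounded). Then g fixes a vertex of the first Helly subdivision: there exists p ∈ E(X) with g·p = p and p(x) ∈ (1/2)·ℕ for every vertex x ∈ X. -/
namespace HellyPaper

lemma aut_dist_le (G : SimpleGraph V) (hconn : G.Connected) (g : Equiv.Perm V)
    (hg : IsGraphAut G g) (x y : V) : G.dist (g x) (g y) ≤ G.dist x y := by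
  obtain ⟨w, hw⟩ := hconn.exists_walk_length_eq_dist x y
  have := SimpleGraph.dist_le (w.map ⟨(g : V → V), fun {a b} h => (hg a b).mpr h⟩)
  rwa [SimpleGraph.Walk.length_map, hw] at this

lemma aut_inv (G : SimpleGraph V) (g : Equiv.Perm V) (hg : IsGraphAut G g) :
    IsGraphAut G g⁻¹ := by
  intro x y
  have := hg (g⁻¹ x) (g⁻¹ y)
  simpa using this.symm

lemma aut_dist (G : SimpleGraph V) (hconn : G.Connected) (g : Equiv.Perm V)
    (hg : IsGraphAut G g) (x y : V) : G.dist (g x) (g y) = G.dist x y := by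
  refine le_antisymm (aut_dist_le G hconn g hg x y) ?_
  have := aut_dist_le G hconn g⁻¹ (aut_inv G g hg) (g x) (g y)
  simpa using this

lemma aut_zpow_dist (G : SimpleGraph V) (hconn : G.Connected) (g : Equiv.Perm V)
    (hg : IsGraphAut G g) (n : ℤ) :
    ∀ x y : V, G.dist ((g ^ n) x) ((g ^ n) y) = G.dist x y := by
  induction n using Int.induction_on with
  | zero => simp
  | succ n ih =>
      intro x y
      have h1 : ∀ z : V, (g ^ ((n : ℤ) + 1)) z = (g ^ (n : ℤ)) (g z) := fun z => by
        rw [zpow_add_one, ← Equiv.Perm.mul_apply]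
      rw [h1, h1, ih (g x) (g y), aut_dist G hconn g hg]
  | pred n ih =>
      intro x y
      have h1 : ∀ z : V, (g ^ (-(n : ℤ) - 1)) z = (g ^ (-(n : ℤ))) (g⁻¹ z) := fun z => by
        rw [zpow_sub_one, ← Equiv.Perm.mul_apply]
      rw [h1, h1, ih (g⁻¹ x) (g⁻¹ y), aut_dist G hconn g⁻¹ (aut_inv G g hg)]

lemma zpow_comp (g : Equiv.Perm V) (a b : ℤ) (z : V) :
    (g ^ a) ((g ^ b) z) = (g ^ (a + b)) z := by
  rw [zpow_add, Equiv.Perm.mul_apply]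

private theorem stmt19_aux {V : Type*} (G : SimpleGraph V) (hconn : G.Connected)
    (g : Equiv.Perm V) (hg : IsGraphAut G g)
    (hell : ∃ (x : V) (R : ℝ), ∀ n : ℤ, (G.dist x ((g ^ n) x) : ℝ) ≤ R) :
    ∃ p : V → ℝ,
      ((∀ x y : V, (G.dist x y : ℝ) ≤ p x + p y) ∧
        ∀ x : V, IsLUB (Set.range fun y => (G.dist x y : ℝ) - p y) (p x)) ∧
      (∀ x, p (g⁻¹ x) = p x) ∧ (∀ x, ∃ k : ℕ, p x = (k : ℝ) / 2) := by
  classical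
  obtain ⟨x₀, R, hR⟩ := hell
  have hdz := aut_zpow_dist G hconn g hg
  have hd1 := aut_dist G hconn g hg
  have hd1' := aut_dist G hconn g⁻¹ (aut_inv G g hg)
  -- the admissible invariant half-integer functions
  set S : Set (V → ℝ) :=
    {h | (∀ x, ∃ k : ℕ, h x = (k : ℝ) / 2) ∧ (∀ x y, (G.dist x y : ℝ) ≤ h x + h y) ∧
      ∀ x, h (g⁻¹ x) = h x} with hSdef
  -- base point f₀
  have hBdd : ∀ x : V, BddAbove (Set.range fun n : ℤ => G.dist x ((g ^ n) x₀)) := by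
    intro x
    refine ⟨G.dist x x₀ + ⌊R⌋₊, ?_⟩
    rintro _ ⟨n, rfl⟩
    show G.dist x ((g ^ n) x₀) ≤ G.dist x x₀ + ⌊R⌋₊
    have h1 : G.dist x ((g ^ n) x₀) ≤ G.dist x x₀ + G.dist x₀ ((g ^ n) x₀) :=
      hconn.dist_triangle
    have h2 : G.dist x₀ ((g ^ n) x₀) ≤ ⌊R⌋₊ := Nat.le_floor (hR n)
    omega
  set N : V → ℕ := fun x => sSup (Set.range fun n : ℤ => G.dist x ((g ^ n) x₀)) with hNdef
  have hNle : ∀ x (n : ℤ), G.dist x ((g ^ n) x₀) ≤ N x :=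
    fun x n => le_csSup (hBdd x) ⟨n, rfl⟩
  have hf₀ : (fun x => (N x : ℝ)) ∈ S := by
    refine ⟨fun x => ⟨2 * N x, by push_cast; ring⟩, ?_, ?_⟩
    · intro x y
      show (G.dist x y : ℝ) ≤ (N x : ℝ) + (N y : ℝ)
      have h1 : G.dist x y ≤ G.dist x x₀ + G.dist x₀ y := hconn.dist_triangle
      have h2 : G.dist x x₀ ≤ N x := by simpa using hNle x 0
      have h3 : G.dist x₀ y ≤ N y := by
        rw [SimpleGraph.dist_comm]; simpa using hNle y 0
      have h4 : G.dist x y ≤ N x + N y := by omega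
      exact_mod_cast h4
    · intro x
      have hrange : (Set.range fun n : ℤ => G.dist x ((g ^ n) x₀)) =
          (Set.range fun n : ℤ => G.dist (g⁻¹ x) ((g ^ n) x₀)) := by
        ext k
        constructor
        · rintro ⟨n, hn⟩
          have hn' : G.dist x ((g ^ n) x₀) = k := hn
          refine ⟨-1 + n, ?_⟩
          show G.dist (g⁻¹ x) ((g ^ (-1 + n)) x₀) = k
          have h5 : (g ^ ((-1 : ℤ) + n)) x₀ = g⁻¹ ((g ^ n) x₀) := by
            rw [← zpow_comp g (-1) n x₀, zpow_neg_one]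
          rw [h5, hd1' x ((g ^ n) x₀)] at *
          exact hn'
        · rintro ⟨n, hn⟩
          have hn' : G.dist (g⁻¹ x) ((g ^ n) x₀) = k := hn
          refine ⟨1 + n, ?_⟩
          show G.dist x ((g ^ (1 + n)) x₀) = k
          have h5 : (g ^ ((1 : ℤ) + n)) x₀ = g ((g ^ n) x₀) := by
            rw [← zpow_comp g 1 n x₀, zpow_one]
          calc G.dist x ((g ^ ((1 : ℤ) + n)) x₀)
              = G.dist (g (g⁻¹ x)) (g ((g ^ n) x₀)) := by
                rw [h5, ← Equiv.Perm.mul_apply g g⁻¹ x, mul_inv_cancel, Equiv.Perm.one_apply]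
            _ = G.dist (g⁻¹ x) ((g ^ n) x₀) := hd1 _ _
            _ = k := hn'
      show ((N (g⁻¹ x) : ℕ) : ℝ) = ((N x : ℕ) : ℝ)
      have : N (g⁻¹ x) = N x := by
        show sSup (Set.range fun n : ℤ => G.dist (g⁻¹ x) ((g ^ n) x₀)) =
          sSup (Set.range fun n : ℤ => G.dist x ((g ^ n) x₀))
        rw [hrange]
      rw [this]
  -- Zorn: a minimal element of S
  set Sd : Set ((V → ℝ)ᵒᵈ) := {h | OrderDual.ofDual h ∈ S} with hSd
  have hzorn := zorn_le_nonempty₀ Sd ?chain (OrderDual.toDual fun x => (N x : ℝ)) hf₀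
  case chain =>
    intro c hc hchain y₀ hy₀
    set T : V → Set ℕ := fun x => {k | ∃ h ∈ c, OrderDual.ofDual h x = (k : ℝ) / 2}
      with hTdef
    have hTne : ∀ x, (T x).Nonempty := by
      intro x
      obtain ⟨k, hk⟩ := (hc hy₀).1 x
      exact ⟨k, y₀, hy₀, hk⟩
    set m : V → ℝ := fun x => ((sInf (T x) : ℕ) : ℝ) / 2 with hmdef
    have hattain : ∀ x, ∃ h ∈ c, OrderDual.ofDual h x = m x := by
      intro x
      obtain ⟨h, hh, hval⟩ := Nat.sInf_mem (hTne x)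
      exact ⟨h, hh, hval⟩
    have hmle : ∀ h ∈ c, ∀ x, m x ≤ OrderDual.ofDual h x := by
      intro h hh x
      obtain ⟨k, hk⟩ := (hc hh).1 x
      rw [hk]
      show ((sInf (T x) : ℕ) : ℝ) / 2 ≤ (k : ℝ) / 2
      have h1 : sInf (T x) ≤ k := Nat.sInf_le ⟨h, hh, hk⟩
      have h2 : ((sInf (T x) : ℕ) : ℝ) ≤ k := Nat.cast_le.mpr h1
      linarith
    have hmS : m ∈ S := by
      refine ⟨fun x => ⟨sInf (T x), rfl⟩, ?_, ?_⟩
      · intro x y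
        obtain ⟨h₁, hh₁, e₁⟩ := hattain x
        obtain ⟨h₂, hh₂, e₂⟩ := hattain y
        rcases eq_or_ne h₁ h₂ with rfl | hne
        · rw [← e₁, ← e₂]; exact (hc hh₁).2.1 x y
        · rcases hchain hh₁ hh₂ hne with hle | hle
          · have hle' : OrderDual.ofDual h₂ ≤ OrderDual.ofDual h₁ := hle
            have hx : OrderDual.ofDual h₂ x = m x :=
              le_antisymm (by rw [← e₁]; exact hle' x) (hmle h₂ hh₂ x)
            rw [← hx, ← e₂]; exact (hc hh₂).2.1 x y
          · have hle' : OrderDual.ofDual h₁ ≤ OrderDual.ofDual h₂ := hle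
            have hy : OrderDual.ofDual h₁ y = m y :=
              le_antisymm (by rw [← e₂]; exact hle' y) (hmle h₁ hh₁ y)
            rw [← hy, ← e₁]; exact (hc hh₁).2.1 x y
      · intro x
        have hTx : T (g⁻¹ x) = T x := by
          ext k
          constructor
          · rintro ⟨h, hh, hval⟩
            exact ⟨h, hh, by rw [← (hc hh).2.2 x]; exact hval⟩
          · rintro ⟨h, hh, hval⟩
            exact ⟨h, hh, by rw [(hc hh).2.2 x]; exact hval⟩
        show ((sInf (T (g⁻¹ x)) : ℕ) : ℝ) / 2 = ((sInf (T x) : ℕ) : ℝ) / 2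
        rw [hTx]
    refine ⟨OrderDual.toDual m, hmS, ?_⟩
    intro z hz
    exact OrderDual.le_toDual.mpr (hmle z hz)
  obtain ⟨fd, _, hfdS, hfdmin⟩ := hzorn
  set f : V → ℝ := OrderDual.ofDual fd with hfdef
  have hfS : f ∈ S := hfdS
  obtain ⟨hhalf, hadm, hinv⟩ := hfS
  have hmin : ∀ h ∈ S, h ≤ f → f ≤ h := by
    intro h hh hle
    exact hfdmin hh hle
  -- f is constant on ⟨g⟩-orbits
  have hfg : ∀ z, f (g z) = f z := by
    intro z
    have := hinv (g z)
    simpa using this.symm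
  have hfzpow : ∀ (n : ℤ) (z : V), f ((g ^ n) z) = f z := by
    intro n
    induction n using Int.induction_on with
    | zero => simp
    | succ n ih =>
        intro z
        have h1 : (g ^ ((n : ℤ) + 1)) z = (g ^ (n : ℤ)) (g z) := by
          rw [zpow_add_one, ← Equiv.Perm.mul_apply]
        rw [h1, ih (g z), hfg]
    | pred n ih =>
        intro z
        have h1 : (g ^ (-(n : ℤ) - 1)) z = (g ^ (-(n : ℤ))) (g⁻¹ z) := by
          rw [zpow_sub_one, ← Equiv.Perm.mul_apply]
        rw [h1, ih (g⁻¹ z), hinv]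
  refine ⟨f, ⟨hadm, ?_⟩, hinv, hhalf⟩
  -- extremality
  intro x
  constructor
  · rintro _ ⟨y, rfl⟩
    show (G.dist x y : ℝ) - f y ≤ f x
    have := hadm x y
    linarith
  · intro b hb
    by_contra hlt
    push_neg at hlt
    -- strict gap of 1/2 everywhere
    have key : ∀ y, (G.dist x y : ℝ) + 1 / 2 ≤ f x + f y := by
      intro y
      obtain ⟨j, hj⟩ := hhalf x
      obtain ⟨k, hk⟩ := hhalf y
      have h1 : (G.dist x y : ℝ) - f y ≤ b := hb ⟨y, rfl⟩
      have h2 : (2 * (G.dist x y : ℕ) : ℝ) - (k : ℝ) < (j : ℝ) := by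
        rw [hk] at h1; rw [hj] at hlt; linarith
      have h3 : (2 * (G.dist x y : ℕ) : ℤ) - (k : ℤ) < (j : ℤ) := by exact_mod_cast h2
      have h4 : (2 * (G.dist x y : ℕ) : ℤ) + 1 ≤ (j : ℤ) + (k : ℤ) := by omega
      have h5 : (2 * (G.dist x y : ℕ) : ℝ) + 1 ≤ (j : ℝ) + (k : ℝ) := by exact_mod_cast h4
      rw [hj, hk]; push_cast at h5 ⊢; linarith
    -- the orbit of x
    set O : Set V := Set.range fun n : ℤ => (g ^ n) x with hOdef
    have hxO : x ∈ O := ⟨0, by simp⟩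
    have hOconst : ∀ z ∈ O, f z = f x := by
      rintro _ ⟨n, rfl⟩; exact hfzpow n x
    have keyO : ∀ z ∈ O, ∀ y, (G.dist z y : ℝ) + 1 / 2 ≤ f x + f y := by
      rintro _ ⟨n, rfl⟩ y
      show (G.dist ((g ^ n) x) y : ℝ) + 1 / 2 ≤ f x + f y
      have hdist : G.dist ((g ^ n) x) y = G.dist x ((g ^ (-n)) y) := by
        rw [← hdz (-n) ((g ^ n) x) y, zpow_comp, neg_add_cancel, zpow_zero,
          Equiv.Perm.one_apply]
      rw [hdist]
      have := key ((g ^ (-n)) y)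
      rwa [hfzpow (-n) y] at this
    have hOinv : ∀ z, g⁻¹ z ∈ O ↔ z ∈ O := by
      intro z
      constructor
      · rintro ⟨n, hn⟩
        have hn' : (g ^ n) x = g⁻¹ z := hn
        refine ⟨1 + n, ?_⟩
        show (g ^ ((1 : ℤ) + n)) x = z
        rw [← zpow_comp g 1 n x, hn', zpow_one, ← Equiv.Perm.mul_apply g g⁻¹ z, mul_inv_cancel, Equiv.Perm.one_apply]
      · rintro ⟨n, hn⟩
        have hn' : (g ^ n) x = z := hn
        refine ⟨-1 + n, ?_⟩
        show (g ^ ((-1 : ℤ) + n)) x = g⁻¹ z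
        rw [← zpow_comp g (-1) n x, hn', zpow_neg_one]
    -- f x = j/2 with j ≥ 1
    obtain ⟨j, hj⟩ := hhalf x
    have hj1 : 1 ≤ j := by
      have hkx := key x
      simp only [SimpleGraph.dist_self] at hkx
      rw [hj] at hkx
      have hj0 : j ≠ 0 := by
        rintro rfl
        norm_num at hkx
      omega
    -- the decreased function
    set f' : V → ℝ := fun z => if z ∈ O then f z - 1 / 2 else f z with hf'def
    have hf'le : f' ≤ f := by
      intro z
      show (if z ∈ O then f z - 1 / 2 else f z) ≤ f z
      split <;> linarith
    have hf'S : f' ∈ S := by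
      refine ⟨?_, ?_, ?_⟩
      · intro z
        show ∃ k : ℕ, (if z ∈ O then f z - 1 / 2 else f z) = (k : ℝ) / 2
        by_cases hz : z ∈ O
        · refine ⟨j - 1, ?_⟩
          rw [if_pos hz, hOconst z hz, hj]
          have hcast : ((j - 1 : ℕ) : ℝ) = (j : ℝ) - 1 := by
            push_cast [hj1]; ring
          rw [hcast]; ring
        · rw [if_neg hz]; exact hhalf z
      · intro a c
        show (G.dist a c : ℝ) ≤ (if a ∈ O then f a - 1 / 2 else f a) +
          (if c ∈ O then f c - 1 / 2 else f c)
        by_cases ha : a ∈ O <;> by_cases hc : c ∈ O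
        · rw [if_pos ha, if_pos hc, hOconst a ha, hOconst c hc, hj]
          have h1 := keyO a ha c
          rw [hOconst c hc, hj] at h1
          have h2 : ((G.dist a c : ℕ) : ℝ) < (j : ℝ) := by linarith
          have h3 : G.dist a c < j := by exact_mod_cast h2
          have h4 : G.dist a c + 1 ≤ j := h3
          have h5 : ((G.dist a c : ℕ) : ℝ) + 1 ≤ (j : ℝ) := by exact_mod_cast h4
          linarith
        · rw [if_pos ha, if_neg hc, hOconst a ha]
          have h1 := keyO a ha c
          linarith
        · rw [if_neg ha, if_pos hc, hOconst c hc]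
          have h1 := keyO c hc a
          rw [SimpleGraph.dist_comm] at h1
          linarith
        · rw [if_neg ha, if_neg hc]; exact hadm a c
      · intro z
        show (if g⁻¹ z ∈ O then f (g⁻¹ z) - 1 / 2 else f (g⁻¹ z)) =
          (if z ∈ O then f z - 1 / 2 else f z)
        by_cases hz : z ∈ O
        · rw [if_pos ((hOinv z).mpr hz), if_pos hz, hinv]
        · rw [if_neg (fun hmem => hz ((hOinv z).mp hmem)), if_neg hz, hinv]
    have hcontra := hmin f' hf'S hf'le x
    have hfx : f' x = f x - 1 / 2 := by
      show (if x ∈ O then f x - 1 / 2 else f x) = f x - 1 / 2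
      rw [if_pos hxO]
    rw [hfx] at hcontra
    linarith


/-- An elliptic automorphism of a Helly graph fixes a vertex of the first Helly
subdivision: a half-integer valued point of the injective hull. -/
theorem stmt19 {V : Type*} (G : SimpleGraph V) (hHelly : IsHellyGraph G)
    (g : Equiv.Perm V) (hg : IsGraphAut G g)
    (hell : ∃ (x : V) (R : ℝ), ∀ n : ℤ, (G.dist x ((g ^ n) x) : ℝ) ≤ R) :
    ∃ p ∈ InjHull G, hullAct g p = p ∧ halfInt p := by
  obtain ⟨p, hp1, hp2, hp3⟩ := stmt19_aux G hHelly.1 g hg hell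
  exact ⟨p, hp1, funext fun x => hp2 x, hp3⟩

end HellyPaper
end
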